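/- Let 𝒜 be a π-adically complete R-algebra, u an R-linear derivation of 𝒜, and b ∈ 𝒜⟨t⟩ := the π-adic completion of 𝒜[t]. Then u extends uniquely to an R-linear derivation v of 𝒜⟨t⟩ with v(t) = b. -/

import Mathlib

/-- The `π`-adic completion `𝒜⟨t⟩` of the polynomial ring `𝒜[t]`. -/
noncomputable abbrev PolyPiCompletion (R : Type*) [CommRing R] (π : R)
    (𝒜 : Type*) [CommRing 𝒜] [Algebra R 𝒜] : Type _ :=
  AdicCompletion (Ideal.span {Polynomial.C (algebraMap R 𝒜 π)}) (Polynomial 𝒜)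

noncomputable instance (R : Type*) [CommRing R] (π : R)
    (𝒜 : Type*) [CommRing 𝒜] [Algebra R 𝒜] :
    Algebra R (PolyPiCompletion R π 𝒜) :=
  ((algebraMap (Polynomial 𝒜)
      (PolyPiCompletion R π 𝒜)).comp (algebraMap R (Polynomial 𝒜))).toAlgebra

open Polynomial AdicCompletion

noncomputable section

variable {R : Type*} [CommRing R] {A : Type*} [CommRing A] [Algebra R A] (π : R)

instance : IsScalarTower R (Polynomial A) (PolyPiCompletion R π A) :=
  inferInstance

instance : SMulCommClass R (PolyPiCompletion R π A) (PolyPiCompletion R π A) :=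
  ⟨fun r x y => by
    ext n
    exact (mul_smul_comm r (x.val n) (y.val n)).symm⟩

def d1 (u : Derivation R A A) : Derivation R (Polynomial A) (Polynomial A) :=
  PolynomialModule.equivPolynomialSelf.compDer u.mapCoeffs

@[simp] lemma d1_C (u : Derivation R A A) (a : A) : d1 u (C a) = C (u a) := by
  simp [d1, ← Polynomial.monomial_zero_left]

@[simp] lemma d1_X (u : Derivation R A A) : d1 u (X : Polynomial A) = 0 := by
  simp [d1]

def DD (u : Derivation R A A) (b : PolyPiCompletion R π A) :
    Derivation R (Polynomial A) (PolyPiCompletion R π A) :=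
  (Algebra.linearMap (Polynomial A) (PolyPiCompletion R π A)).compDer (d1 u)
    + b • (Algebra.linearMap (Polynomial A) (PolyPiCompletion R π A)).compDer
        ((Polynomial.derivative' (R := A)).restrictScalars R)

lemma DD_apply (u : Derivation R A A) (b : PolyPiCompletion R π A) (p : Polynomial A) :
    DD π u b p = algebraMap (Polynomial A) (PolyPiCompletion R π A) (d1 u p)
      + b * algebraMap (Polynomial A) (PolyPiCompletion R π A) (Polynomial.derivative p) := rfl

@[simp] lemma DD_C (u : Derivation R A A) (b : PolyPiCompletion R π A) (a : A) :
    DD π u b (C a) = algebraMap (Polynomial A) (PolyPiCompletion R π A) (C (u a)) := by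
  simp [DD_apply]

@[simp] lemma DD_X (u : Derivation R A A) (b : PolyPiCompletion R π A) :
    DD π u b (X : Polynomial A) = b := by
  simp [DD_apply]

lemma DD_t (u : Derivation R A A) (b : PolyPiCompletion R π A) :
    DD π u b (C (algebraMap R A π)) = 0 := by
  rw [DD_C, Derivation.map_algebraMap]
  simp

lemma val_smul_zero {S : Type*} [CommRing S] {I : Ideal S} {m : ℕ} {r : S} (hr : r ∈ I ^ m)
    (x : AdicCompletion I S) : (r • x).val m = 0 := by
  rw [AdicCompletion.val_smul_apply]
  induction (x.val m) using Quotient.inductionOn' with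
  | h z =>
    show r • (Submodule.Quotient.mk z : S ⧸ (I ^ m • ⊤ : Submodule S S)) = 0
    rw [← Submodule.Quotient.mk_smul, Submodule.Quotient.mk_eq_zero]
    exact Submodule.smul_mem_smul hr Submodule.mem_top

lemma DD_val_of_mem (u : Derivation R A A) (b : PolyPiCompletion R π A) {m : ℕ}
    {r : Polynomial A} (hr : r ∈ Ideal.span {C (algebraMap R A π)} ^ m) :
    (DD π u b r).val m = 0 := by
  rw [Ideal.span_singleton_pow, Ideal.mem_span_singleton] at hr
  obtain ⟨c, rfl⟩ := hr
  rw [Derivation.leibniz, Derivation.leibniz_pow, DD_t]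
  simp only [smul_zero, add_zero]
  have : (C (algebraMap R A π)) ^ m ∈ Ideal.span {C (algebraMap R A π)} ^ m := by
    rw [Ideal.span_singleton_pow, Ideal.mem_span_singleton]
  exact val_smul_zero this _

lemma DD_val_of_mem' (u : Derivation R A A) (b : PolyPiCompletion R π A) {m : ℕ}
    {g : Polynomial A}
    (hg : g ∈ (Ideal.span {C (algebraMap R A π)} ^ m • ⊤ :
      Submodule (Polynomial A) (Polynomial A))) :
    (DD π u b g).val m = 0 := by
  refine Submodule.smul_induction_on hg (fun r hr z _ => ?_) (fun x y hx hy => ?_)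
  · have hz : r • z = r * z := rfl
    rw [hz, Derivation.leibniz, AdicCompletion.val_add_apply, val_smul_zero hr,
      AdicCompletion.val_smul_apply, DD_val_of_mem π u b hr, smul_zero, zero_add]
  · rw [map_add, AdicCompletion.val_add_apply, hx, hy, add_zero]

section vdef
variable (u : Derivation R A A) (b : PolyPiCompletion R π A)

def vAux (f : AdicCauchySequence (Ideal.span {C (algebraMap R A π)}) (Polynomial A)) :
    PolyPiCompletion R π A :=
  ⟨fun n => (DD π u b (f n)).val n, by
    intro m n hmn
    rw [(DD π u b (f n)).property hmn]
    have hmem : f n - f m ∈ (Ideal.span {C (algebraMap R A π)} ^ m • ⊤ :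
        Submodule (Polynomial A) (Polynomial A)) :=
      SModEq.sub_mem.1 (f.property hmn).symm
    have h2 := DD_val_of_mem' π u b hmem
    rw [map_sub, AdicCompletion.val_sub_apply, sub_eq_zero] at h2
    exact h2⟩

@[simp] lemma vAux_val (f) (n : ℕ) : (vAux π u b f).val n = (DD π u b (f n)).val n := rfl

lemma vAux_congr {f g} (h : AdicCompletion.mk _ _ f = AdicCompletion.mk _ _ g) :
    vAux π u b f = vAux π u b g := by
  ext n
  have : f n - g n ∈ (Ideal.span {C (algebraMap R A π)} ^ n • ⊤ :
      Submodule (Polynomial A) (Polynomial A)) := by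
    rw [← Submodule.Quotient.eq]
    have := congrArg (fun z => z.val n) h
    simpa [AdicCompletion.mk_apply_coe] using this
  have h2 := DD_val_of_mem' π u b this
  rw [map_sub, AdicCompletion.val_sub_apply, sub_eq_zero] at h2
  simpa using h2

def vF (x : PolyPiCompletion R π A) : PolyPiCompletion R π A :=
  vAux π u b (AdicCompletion.mk_surjective _ _ x).choose

lemma vF_mk (f) : vF π u b (AdicCompletion.mk _ _ f) = vAux π u b f :=
  vAux_congr π u b (AdicCompletion.mk_surjective _ _ (AdicCompletion.mk _ _ f)).choose_spec

/-- the constant Cauchy sequence -/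
def constSeq (p : Polynomial A) :
    AdicCauchySequence (Ideal.span {C (algebraMap R A π)}) (Polynomial A) :=
  ⟨fun _ => p, fun _ => rfl⟩

lemma mk_constSeq (p : Polynomial A) :
    AdicCompletion.mk _ _ (constSeq π p) = AdicCompletion.of _ _ p := rfl

lemma vF_of (p : Polynomial A) :
    vF π u b (AdicCompletion.of _ _ p) = DD π u b p := by
  rw [← mk_constSeq, vF_mk]
  ext n
  rfl

lemma algebraMap_eq_of' (p : Polynomial A) :
    algebraMap (Polynomial A) (PolyPiCompletion R π A) p = AdicCompletion.of _ _ p := rfl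

lemma quot_smul_eq {S : Type*} [CommRing S] (I : Ideal S) (n : ℕ) (p : S)
    (y : S ⧸ (I ^ n • ⊤ : Ideal S)) :
    p • y = Submodule.mkQ (I ^ n • ⊤ : Submodule S S) p * y := by
  induction y using Quotient.inductionOn' with
  | h z =>
    show p • Submodule.Quotient.mk z = _
    rw [← Submodule.Quotient.mk_smul]
    rfl


lemma mem_smul_top_iff' {S : Type*} [CommRing S] (I : Ideal S) (m : ℕ) (x : S) :
    x ∈ (I ^ m • ⊤ : Submodule S S) ↔ x ∈ I ^ m := by
  rw [smul_eq_mul, Ideal.mul_top]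

theorem density {S : Type*} [CommRing S] {t : S} {I : Ideal S} (hI : I = Ideal.span {t})
    (x : AdicCompletion I S) (n : ℕ) :
    ∃ p : S, x - AdicCompletion.of I S p ∈
      (I ^ n • ⊤ : Submodule S (AdicCompletion I S)) := by
  have hpow : ∀ m : ℕ, I ^ m = Ideal.span {t ^ m} := fun m => by
    rw [hI, Ideal.span_singleton_pow]
  obtain ⟨f, rfl⟩ := AdicCompletion.mk_surjective I S x
  refine ⟨f n, ?_⟩
  have hdvd : ∀ k : ℕ, ∃ c : S, f (k+1+n) - f (k+n) = t ^ (k+n) * c := by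
    intro k
    have h := f.property (show k+n ≤ k+1+n by omega)
    rw [SModEq.sub_mem, mem_smul_top_iff', hpow, Ideal.mem_span_singleton] at h
    obtain ⟨c, hc⟩ := h
    exact ⟨-c, by rw [mul_neg, ← hc]; ring⟩
  choose c hc using hdvd
  have key : ∀ k, t ^ n * (∑ j ∈ Finset.range k, t ^ j * c j) = f (k+n) - f n := by
    intro k
    induction k with
    | zero => simp
    | succ k ih =>
      rw [Finset.sum_range_succ]
      have := hc k
      linear_combination ih - this
  have hcauchy : ∀ k, (∑ j ∈ Finset.range k, t ^ j * c j) ≡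
      (∑ j ∈ Finset.range (k+1), t ^ j * c j) [SMOD (I ^ k • ⊤ : Submodule S S)] := by
    intro k
    rw [SModEq.sub_mem, Finset.sum_range_succ]
    have h4 : (∑ j ∈ Finset.range k, t ^ j * c j) -
        ((∑ j ∈ Finset.range k, t ^ j * c j) + t ^ k * c k) = -(t ^ k * c k) := by ring
    rw [h4]
    refine neg_mem ((mem_smul_top_iff' _ _ _).2 ?_)
    rw [hpow, Ideal.mem_span_singleton]
    exact ⟨c k, rfl⟩
  set hs : AdicCauchySequence I S :=
    AdicCauchySequence.mk I S (fun k => ∑ j ∈ Finset.range k, t ^ j * c j) hcauchy with hhs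
  have heq : AdicCompletion.mk I S f - AdicCompletion.of I S (f.val n)
      = t ^ n • AdicCompletion.mk I S hs := by
    ext k
    rw [AdicCompletion.val_sub_apply, AdicCompletion.val_smul_apply, AdicCompletion.mk_apply_coe,
      AdicCompletion.mk_apply_coe]
    show Submodule.Quotient.mk (f k) - Submodule.Quotient.mk (f n)
      = t ^ n • Submodule.Quotient.mk (hs.val k)
    have h1 : hs.val k = ∑ j ∈ Finset.range k, t ^ j * c j := rfl
    have h3 : t ^ n • (hs.val k) = f (k+n) - f n := by rw [h1]; exact key k
    rw [← Submodule.Quotient.mk_smul, h3, Submodule.Quotient.mk_sub]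
    have h2 : Submodule.Quotient.mk (p := (I ^ k • ⊤ : Submodule S S)) (f (k+n))
        = Submodule.Quotient.mk (f k) := AdicCauchySequence.mk_eq_mk (by omega) f
    rw [h2]
  rw [heq]
  refine Submodule.smul_mem_smul ?_ Submodule.mem_top
  rw [hpow, Ideal.mem_span_singleton]

lemma vF_add (x y : PolyPiCompletion R π A) :
    vF π u b (x + y) = vF π u b x + vF π u b y := by
  obtain ⟨f, rfl⟩ := AdicCompletion.mk_surjective _ _ x
  obtain ⟨g, rfl⟩ := AdicCompletion.mk_surjective _ _ y
  rw [← map_add, vF_mk, vF_mk, vF_mk]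
  ext n
  simp

lemma vF_mul (x y : PolyPiCompletion R π A) :
    vF π u b (x * y) = x * vF π u b y + y * vF π u b x := by
  obtain ⟨f, rfl⟩ := AdicCompletion.mk_surjective _ _ x
  obtain ⟨g, rfl⟩ := AdicCompletion.mk_surjective _ _ y
  have hmul : AdicCompletion.mk _ _ f * AdicCompletion.mk _ _ g
      = AdicCompletion.mk _ _ (f * g) := ((AdicCompletion.mkₐ _).map_mul f g).symm
  rw [hmul, vF_mk, vF_mk, vF_mk]
  ext n
  have hfg : (f * g) n = f n * g n := rfl
  simp only [vAux_val, AdicCompletion.val_add_apply, AdicCompletion.val_mul, hfg]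
  rw [Derivation.leibniz, AdicCompletion.val_add_apply, AdicCompletion.val_smul_apply,
    AdicCompletion.val_smul_apply]
  rw [quot_smul_eq, quot_smul_eq, AdicCompletion.mk_apply_coe, AdicCompletion.mk_apply_coe]

lemma vF_algebraMap (r : R) :
    vF π u b (algebraMap R (PolyPiCompletion R π A) r) = 0 := by
  have : algebraMap R (PolyPiCompletion R π A) r
      = AdicCompletion.of _ _ (algebraMap R (Polynomial A) r) := rfl
  rw [this, vF_of, Derivation.map_algebraMap]

def vDer : Derivation R (PolyPiCompletion R π A) (PolyPiCompletion R π A) where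
  toFun := vF π u b
  map_add' := vF_add π u b
  map_smul' r x := by
    simp only [RingHom.id_apply]
    rw [Algebra.smul_def, vF_mul, vF_algebraMap, mul_zero, add_zero, ← Algebra.smul_def]
    ext n
    exact (Algebra.smul_def r ((vF π u b x).val n)).symm
  map_one_eq_zero' := by
    show vF π u b 1 = 0
    have : (1 : PolyPiCompletion R π A) = AdicCompletion.of _ _ 1 := rfl
    rw [this, vF_of, Derivation.map_one_eq_zero]
  leibniz' x y := by
    show vF π u b (x * y) = x • vF π u b y + y • vF π u b x
    rw [smul_eq_mul, smul_eq_mul]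
    exact vF_mul π u b x y

@[simp] lemma vDer_apply (x) : vDer π u b x = vF π u b x := rfl

lemma vDer_C (a : A) :
    vDer π u b (algebraMap (Polynomial A) (PolyPiCompletion R π A) (C a)) =
      algebraMap (Polynomial A) (PolyPiCompletion R π A) (C (u a)) := by
  rw [vDer_apply, algebraMap_eq_of', vF_of, DD_C]

lemma vDer_X :
    vDer π u b (algebraMap (Polynomial A) (PolyPiCompletion R π A) X) = b := by
  rw [vDer_apply, algebraMap_eq_of', vF_of, DD_X]

end vdef

section uniq
variable (u : Derivation R A A) (b : PolyPiCompletion R π A)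

lemma smul_eq_of_mul' (p : Polynomial A) (x : PolyPiCompletion R π A) :
    p • x = algebraMap (Polynomial A) (PolyPiCompletion R π A) p * x := by
  rw [← Algebra.smul_def]

lemma uniq_vDer (v' : Derivation R (PolyPiCompletion R π A) (PolyPiCompletion R π A))
    (hC : ∀ a : A, v' (algebraMap (Polynomial A) (PolyPiCompletion R π A) (C a)) =
      algebraMap (Polynomial A) (PolyPiCompletion R π A) (C (u a)))
    (hX : v' (algebraMap (Polynomial A) (PolyPiCompletion R π A) X) = b) :
    v' = vDer π u b := by
  set d := v' - vDer π u b with hd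
  have hof : ∀ p : Polynomial A,
      d (algebraMap (Polynomial A) (PolyPiCompletion R π A) p) = 0 := by
    intro p
    induction p using Polynomial.induction_on with
    | C a => rw [hd, Derivation.sub_apply, hC a, vDer_C, sub_self]
    | add p q hp hq => rw [map_add, map_add, hp, hq, add_zero]
    | monomial k a ih =>
      have : algebraMap (Polynomial A) (PolyPiCompletion R π A) (C a * X ^ (k+1))
          = algebraMap (Polynomial A) (PolyPiCompletion R π A) (C a * X ^ k)
            * algebraMap (Polynomial A) (PolyPiCompletion R π A) X := by
        rw [← map_mul]; ring_nf
      rw [this, Derivation.leibniz, ih, smul_zero]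
      have hdX : d (algebraMap (Polynomial A) (PolyPiCompletion R π A) X) = 0 := by
        rw [hd, Derivation.sub_apply, hX, vDer_X, sub_self]
      rw [hdX, smul_zero, add_zero]
  have hstable : ∀ n : ℕ, ∀ z ∈ ((Ideal.span {C (algebraMap R A π)}) ^ n • ⊤ :
      Submodule (Polynomial A) (PolyPiCompletion R π A)), d z ∈
      ((Ideal.span {C (algebraMap R A π)}) ^ n • ⊤ :
      Submodule (Polynomial A) (PolyPiCompletion R π A)) := by
    intro n z hz
    refine Submodule.smul_induction_on hz (fun r hr w _ => ?_) (fun a c ha hc => ?_)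
    · have h1 : r • w = algebraMap (Polynomial A) (PolyPiCompletion R π A) r * w :=
        smul_eq_of_mul' π r w
      have h2 : d (r • w) = r • d w := by
        rw [h1, Derivation.leibniz, hof r, smul_zero, add_zero, smul_eq_mul,
          ← smul_eq_of_mul' π r (d w)]
      rw [h2]
      exact Submodule.smul_mem_smul hr Submodule.mem_top
    · rw [map_add]; exact Submodule.add_mem _ ha hc
  have hzero : ∀ x, d x = 0 := by
    intro x
    refine IsHausdorff.haus (inferInstance :
      IsHausdorff (Ideal.span {C (algebraMap R A π)}) (PolyPiCompletion R π A)) (d x)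
      (fun n => ?_)
    rw [SModEq.zero]
    obtain ⟨p, hp⟩ := density rfl x n
    have : d x = d (x - AdicCompletion.of _ _ p) := by
      rw [map_sub, ← algebraMap_eq_of' π p, hof p, sub_zero]
    rw [this]
    exact hstable n _ hp
  refine Derivation.ext fun x => ?_
  have := hzero x
  rw [hd, Derivation.sub_apply, sub_eq_zero] at this
  exact this

end uniq

end

/-- Let `R` be a complete DVR with nonzero nonunit `π`, `𝒜` a
`π`-adically complete `R`-algebra, `u` an `R`-linear derivation of `𝒜` and
`b ∈ 𝒜⟨t⟩`, the `π`-adic completion of `𝒜[t]`.  Then `u` extends uniquely to an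
`R`-linear derivation `v` of `𝒜⟨t⟩` with `v(t) = b`. -/
theorem derivation_extends_to_pi_adic_completion_of_polynomials
    {R : Type*} [CommRing R] [IsDomain R] [IsDiscreteValuationRing R]
    (π : R) (hπ0 : π ≠ 0) (hπu : ¬IsUnit π)
    [IsAdicComplete (Ideal.span {π}) R]
    (𝒜 : Type*) [CommRing 𝒜] [Algebra R 𝒜]
    [IsAdicComplete (Ideal.span {algebraMap R 𝒜 π}) 𝒜]
    (u : Derivation R 𝒜 𝒜) (b : PolyPiCompletion R π 𝒜) :
    ∃! v : Derivation R (PolyPiCompletion R π 𝒜) (PolyPiCompletion R π 𝒜),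
      (∀ a : 𝒜,
        v (algebraMap (Polynomial 𝒜) (PolyPiCompletion R π 𝒜) (Polynomial.C a)) =
          algebraMap (Polynomial 𝒜) (PolyPiCompletion R π 𝒜) (Polynomial.C (u a))) ∧
      v (algebraMap (Polynomial 𝒜) (PolyPiCompletion R π 𝒜) Polynomial.X) = b := by
  exact ⟨vDer π u b, ⟨fun a => vDer_C π u b a, vDer_X π u b⟩,
    fun v' hv' => uniq_vDer π u b v' hv'.1 hv'.2⟩
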